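/- Let κ satisfy |κ(α,β)| ≤ C_κ/(1 + d(α,β)^s) with s > 2, and let x, y ∈ ℝ^N. Then there exists C depending only on s and C_κ such that ∑_{a2,a4=1}^N |∑_{a1,a3=1}^N κ((a1,a2),(a3,a4)) x_{a1} y_{a3}| ≤ C·N·‖x‖₂·‖y‖₂. More precisely, ∑_{a1,a2,a3,a4} |κ((a1,a2),(a3,a4))|·|x_{a1}|·|y_{a3}| ≤ C·N·‖x‖₂·‖y‖₂. -/

import Mathlib

open Finset MeasureTheory

/-- The metric on index pairs: d((a1,a2),(a3,a4)) = min(|a1-a3|+|a2-a4|, |a1-a4|+|a2-a3|). -/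
noncomputable def dIdx {N : ℕ} (a b : Fin N × Fin N) : ℝ :=
  min (|((a.1:ℕ):ℝ) - ((b.1:ℕ):ℝ)| + |((a.2:ℕ):ℝ) - ((b.2:ℕ):ℝ)|)
      (|((a.1:ℕ):ℝ) - ((b.2:ℕ):ℝ)| + |((a.2:ℕ):ℝ) - ((b.1:ℕ):ℝ)|)

/-- Euclidean norm of a vector in ℝ^N. -/
noncomputable def eucNorm {N : ℕ} (x : Fin N → ℝ) : ℝ := Real.sqrt (∑ i, x i ^ 2)

lemma range_sum_bound (p : ℝ) (hp : 1 < p) (N : ℕ) :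
    ∑ m ∈ range N, 1 / (1 + (m:ℝ) ^ p) ≤ 1 + ∑' n : ℕ, 1 / (n:ℝ) ^ p := by
  have hg : Summable (fun n : ℕ => 1 / (n:ℝ) ^ p) := Real.summable_one_div_nat_rpow.mpr hp
  have hnn : ∀ n : ℕ, 0 ≤ 1 / (n:ℝ) ^ p := fun n => by positivity
  have htnn : 0 ≤ ∑' n : ℕ, 1 / (n:ℝ) ^ p := tsum_nonneg hnn
  cases N with
  | zero => simp only [Finset.range_zero, Finset.sum_empty]; linarith
  | succ M =>
    rw [Finset.sum_range_succ']
    have h0 : 1 / (1 + ((0:ℕ):ℝ) ^ p) ≤ 1 := by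
      rw [Nat.cast_zero, Real.zero_rpow (by linarith)]
      norm_num
    have hstep : ∑ m ∈ range M, 1 / (1 + ((m+1:ℕ):ℝ) ^ p)
        ≤ ∑ m ∈ range M, 1 / (((m+1:ℕ):ℝ)) ^ p := by
      apply Finset.sum_le_sum
      intro m _
      apply one_div_le_one_div_of_le
      · positivity
      · linarith [Real.rpow_nonneg (by positivity : (0:ℝ) ≤ ((m+1:ℕ):ℝ)) p]
    have himg : ∑ m ∈ range M, 1 / (((m+1:ℕ):ℝ)) ^ p ≤ ∑' n : ℕ, 1 / (n:ℝ) ^ p := by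
      have h := Summable.sum_le_tsum ((range M).image (fun n : ℕ => n + 1)) (fun i _ => hnn i) hg
      rwa [Finset.sum_image (fun a _ b _ h => by omega)] at h
    linarith

lemma abs_cast_dist (a b : ℕ) : |(a:ℝ) - (b:ℝ)| = ((Nat.dist a b : ℕ):ℝ) := by
  rcases le_total a b with h | h
  · rw [Nat.dist_eq_sub_of_le h, abs_sub_comm, abs_of_nonneg (by
      have : (a:ℝ) ≤ b := Nat.cast_le.mpr h
      linarith)]
    push_cast [h]
    ring
  · rw [Nat.dist_eq_sub_of_le_right h, abs_of_nonneg (by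
      have : (b:ℝ) ≤ a := Nat.cast_le.mpr h
      linarith)]
    push_cast [h]
    ring


lemma row_bound (p : ℝ) (hp : 1 < p) (N : ℕ) (i : Fin N) :
    ∑ j : Fin N, 1 / (1 + |((i:ℕ):ℝ) - ((j:ℕ):ℝ)| ^ p)
      ≤ 2 * (1 + ∑' n : ℕ, 1 / (n:ℝ) ^ p) := by
  have hterm : ∀ j : Fin N, 1 / (1 + |((i:ℕ):ℝ) - ((j:ℕ):ℝ)| ^ p)
      = 1 / (1 + ((Nat.dist i.val j.val : ℕ):ℝ) ^ p) := by
    intro j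
    rw [abs_cast_dist]
  simp only [hterm]
  set f : ℕ → ℝ := fun m => 1 / (1 + (m:ℝ) ^ p) with hf
  have hfnn : ∀ m, 0 ≤ f m := fun m => by positivity
  rw [← Finset.sum_filter_add_sum_filter_not univ (fun j : Fin N => j.val ≤ i.val)]
  have hA : ∑ j ∈ univ.filter (fun j : Fin N => j.val ≤ i.val), f (Nat.dist i.val j.val)
      ≤ ∑ m ∈ range N, f m := by
    have key : ∑ j ∈ univ.filter (fun j : Fin N => j.val ≤ i.val), f (Nat.dist i.val j.val)
        = ∑ m ∈ (univ.filter (fun j : Fin N => j.val ≤ i.val)).image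
            (fun j : Fin N => i.val - j.val), f m := by
      rw [Finset.sum_image]
      · apply Finset.sum_congr rfl
        intro j hj
        simp only [Finset.mem_filter] at hj
        congr 1
        rw [Nat.dist_eq_sub_of_le_right hj.2]
      · intro a ha b hb h
        simp only [Finset.mem_coe, Finset.mem_filter] at ha hb h
        exact Fin.ext (by omega)
    rw [key]
    apply Finset.sum_le_sum_of_subset_of_nonneg
    · intro m hm
      simp only [Finset.mem_image, Finset.mem_filter] at hm
      obtain ⟨j, _, rfl⟩ := hm
      exact Finset.mem_range.mpr (by omega)
    · intro m _ _; exact hfnn m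
  have hB : ∑ j ∈ univ.filter (fun j : Fin N => ¬ j.val ≤ i.val), f (Nat.dist i.val j.val)
      ≤ ∑ m ∈ range N, f m := by
    have key : ∑ j ∈ univ.filter (fun j : Fin N => ¬ j.val ≤ i.val), f (Nat.dist i.val j.val)
        = ∑ m ∈ (univ.filter (fun j : Fin N => ¬ j.val ≤ i.val)).image
            (fun j : Fin N => j.val - i.val), f m := by
      rw [Finset.sum_image]
      · apply Finset.sum_congr rfl
        intro j hj
        simp only [Finset.mem_filter] at hj
        congr 1
        rw [Nat.dist_eq_sub_of_le (by omega)]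
      · intro a ha b hb h
        simp only [Finset.mem_coe, Finset.mem_filter] at ha hb h
        exact Fin.ext (by omega)
    rw [key]
    apply Finset.sum_le_sum_of_subset_of_nonneg
    · intro m hm
      simp only [Finset.mem_image, Finset.mem_filter] at hm
      obtain ⟨j, _, rfl⟩ := hm
      exact Finset.mem_range.mpr (by omega)
    · intro m _ _; exact hfnn m
  have hr := range_sum_bound p hp N
  simp only [hf] at hA hB
  linarith

lemma prod_bound (p : ℝ) (hp : 1 ≤ p) (u v : ℝ) (hu : 0 ≤ u) (hv : 0 ≤ v) :
    1 / (1 + (u + v) ^ (p + p)) ≤ 4 * (1 / (1 + u ^ p)) * (1 / (1 + v ^ p)) := by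
  have hp0 : 0 < p := by linarith
  have huv : 0 ≤ u + v := by linarith
  have hW : 0 ≤ (u + v) ^ (p + p) := Real.rpow_nonneg huv _
  have hup : 0 ≤ u ^ p := Real.rpow_nonneg hu _
  have hvp : 0 ≤ v ^ p := Real.rpow_nonneg hv _
  have h1 : u ^ p ≤ 1 + (u + v) ^ (p + p) := by
    rcases le_total u 1 with h | h
    · have := Real.rpow_le_one hu h (le_of_lt hp0)
      linarith
    · have e1 : u ^ p ≤ u ^ (p + p) := Real.rpow_le_rpow_of_exponent_le h (by linarith)
      have e2 : u ^ (p + p) ≤ (u + v) ^ (p + p) :=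
        Real.rpow_le_rpow hu (by linarith) (by linarith)
      linarith
  have h2 : v ^ p ≤ 1 + (u + v) ^ (p + p) := by
    rcases le_total v 1 with h | h
    · have := Real.rpow_le_one hv h (le_of_lt hp0)
      linarith
    · have e1 : v ^ p ≤ v ^ (p + p) := Real.rpow_le_rpow_of_exponent_le h (by linarith)
      have e2 : v ^ (p + p) ≤ (u + v) ^ (p + p) :=
        Real.rpow_le_rpow hv (by linarith) (by linarith)
      linarith
  have h3 : u ^ p * v ^ p ≤ (u + v) ^ (p + p) := by
    have e1 : u ^ p * v ^ p = (u * v) ^ p := (Real.mul_rpow hu hv).symm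
    have e2 : (u * v) ^ p ≤ ((u + v) * (u + v)) ^ p :=
      Real.rpow_le_rpow (mul_nonneg hu hv)
        (mul_le_mul (by linarith) (by linarith) hv huv) hp0.le
    have e3 : ((u + v) * (u + v)) ^ p = (u + v) ^ p * (u + v) ^ p :=
      Real.mul_rpow huv huv
    have e4 : (u + v) ^ (p + p) = (u + v) ^ p * (u + v) ^ p :=
      Real.rpow_add' huv (by positivity)
    rw [e1, e4, ← e3]
    exact e2
  have key : (1 + u ^ p) * (1 + v ^ p) ≤ 4 * (1 + (u + v) ^ (p + p)) := by nlinarith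
  have d1 : 0 < 1 + u ^ p := by linarith
  have d2 : 0 < 1 + v ^ p := by linarith
  have d3 : 0 < 1 + (u + v) ^ (p + p) := by linarith
  rw [div_le_iff₀ d3] at *
  have expand : 4 * (1 / (1 + u ^ p)) * (1 / (1 + v ^ p)) = 4 / ((1 + u ^ p) * (1 + v ^ p)) := by
    field_simp
  rw [expand, div_mul_eq_mul_div, le_div_iff₀ (by positivity), one_mul]
  nlinarith

theorem cumulant_two_vectors_two_sums (s Cκ : ℝ) (hs : 2 < s) (hCκ : 0 < Cκ) :
    ∃ C : ℝ, 0 < C ∧ ∀ (N : ℕ) (κ : Fin N × Fin N → Fin N × Fin N → ℝ),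
      (∀ α β, |κ α β| ≤ Cκ / (1 + dIdx α β ^ s)) →
      ∀ (x y : Fin N → ℝ),
        (∑ a2 : Fin N, ∑ a4 : Fin N,
            |∑ a1 : Fin N, ∑ a3 : Fin N, κ (a1, a2) (a3, a4) * x a1 * y a3|
          ≤ C * N * eucNorm x * eucNorm y) ∧
        (∑ a1 : Fin N, ∑ a2 : Fin N, ∑ a3 : Fin N, ∑ a4 : Fin N,
            |κ (a1, a2) (a3, a4)| * |x a1| * |y a3|
          ≤ C * N * eucNorm x * eucNorm y) := by
  have hp1 : 1 < s / 2 := by linarith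
  set p := s / 2 with hpdef
  have hs' : s = p + p := by rw [hpdef]; ring
  have hg : Summable (fun n : ℕ => 1 / (n:ℝ) ^ p) := Real.summable_one_div_nat_rpow.mpr hp1
  have htnn : 0 ≤ ∑' n : ℕ, 1 / (n:ℝ) ^ p := tsum_nonneg (fun n => by positivity)
  set S : ℝ := 1 + ∑' n : ℕ, 1 / (n:ℝ) ^ p with hSdef
  have hS1 : 1 ≤ S := by rw [hSdef]; linarith
  have hS0 : 0 < S := by linarith
  refine ⟨32 * Cκ * S ^ 2, mul_pos (mul_pos (by norm_num) hCκ) (pow_pos hS0 2), ?_⟩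
  intro N κ hκ x y
  set K : Fin N → Fin N → ℝ := fun i j => 1 / (1 + |((i:ℕ):ℝ) - ((j:ℕ):ℝ)| ^ p) with hK
  have hKnn : ∀ i j, 0 ≤ K i j := fun i j => by
    have : (0:ℝ) ≤ |((i:ℕ):ℝ) - ((j:ℕ):ℝ)| ^ p := Real.rpow_nonneg (abs_nonneg _) _
    rw [hK]; positivity
  have hKsym : ∀ i j, K i j = K j i := fun i j => by
    rw [hK]; simp only; rw [abs_sub_comm]
  have hrow : ∀ i, ∑ j, K i j ≤ 2 * S := fun i => row_bound p hp1 N i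
  have hrow' : ∀ j, ∑ i, K i j ≤ 2 * S := fun j => by
    calc ∑ i, K i j = ∑ i, K j i := Finset.sum_congr rfl (fun i _ => hKsym i j)
      _ ≤ 2 * S := hrow j
  -- pointwise bound on κ
  have hκ4 : ∀ a1 a2 a3 a4 : Fin N, |κ (a1,a2) (a3,a4)|
      ≤ 4 * Cκ * (K a1 a3 * K a2 a4) + 4 * Cκ * (K a1 a4 * K a2 a3) := by
    intro a1 a2 a3 a4
    have h := hκ (a1,a2) (a3,a4)
    have hd : dIdx (a1,a2) (a3,a4)
        = min (|((a1:ℕ):ℝ) - ((a3:ℕ):ℝ)| + |((a2:ℕ):ℝ) - ((a4:ℕ):ℝ)|)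
              (|((a1:ℕ):ℝ) - ((a4:ℕ):ℝ)| + |((a2:ℕ):ℝ) - ((a3:ℕ):ℝ)|) := rfl
    have hb : ∀ (i j k l : Fin N),
        Cκ / (1 + (|((i:ℕ):ℝ) - ((j:ℕ):ℝ)| + |((k:ℕ):ℝ) - ((l:ℕ):ℝ)|) ^ s)
          ≤ 4 * Cκ * (K i j * K k l) := by
      intro i j k l
      have hpb := prod_bound p hp1.le _ _ (abs_nonneg (((i:ℕ):ℝ) - ((j:ℕ):ℝ)))
        (abs_nonneg (((k:ℕ):ℝ) - ((l:ℕ):ℝ)))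
      rw [← hs'] at hpb
      calc Cκ / (1 + (|((i:ℕ):ℝ) - ((j:ℕ):ℝ)| + |((k:ℕ):ℝ) - ((l:ℕ):ℝ)|) ^ s)
          = Cκ * (1 / (1 + (|((i:ℕ):ℝ) - ((j:ℕ):ℝ)| + |((k:ℕ):ℝ) - ((l:ℕ):ℝ)|) ^ s)) := by
            ring
        _ ≤ Cκ * (4 * (1 / (1 + |((i:ℕ):ℝ) - ((j:ℕ):ℝ)| ^ p))
              * (1 / (1 + |((k:ℕ):ℝ) - ((l:ℕ):ℝ)| ^ p))) :=
            mul_le_mul_of_nonneg_left hpb hCκ.le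
        _ = 4 * Cκ * (K i j * K k l) := by rw [hK]; ring
    have hnn : ∀ (t : ℝ), 0 ≤ t → 0 ≤ Cκ / (1 + t ^ s) := by
      intro t ht
      have h1 : (0:ℝ) ≤ t ^ s := Real.rpow_nonneg ht _
      positivity
    have habs1 : (0:ℝ) ≤ |((a1:ℕ):ℝ) - ((a3:ℕ):ℝ)| + |((a2:ℕ):ℝ) - ((a4:ℕ):ℝ)| := by positivity
    have habs2 : (0:ℝ) ≤ |((a1:ℕ):ℝ) - ((a4:ℕ):ℝ)| + |((a2:ℕ):ℝ) - ((a3:ℕ):ℝ)| := by positivity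
    have hmin : Cκ / (1 + dIdx (a1,a2) (a3,a4) ^ s)
        ≤ Cκ / (1 + (|((a1:ℕ):ℝ) - ((a3:ℕ):ℝ)| + |((a2:ℕ):ℝ) - ((a4:ℕ):ℝ)|) ^ s)
          + Cκ / (1 + (|((a1:ℕ):ℝ) - ((a4:ℕ):ℝ)| + |((a2:ℕ):ℝ) - ((a3:ℕ):ℝ)|) ^ s) := by
      rw [hd]
      rcases min_choice (|((a1:ℕ):ℝ) - ((a3:ℕ):ℝ)| + |((a2:ℕ):ℝ) - ((a4:ℕ):ℝ)|)
        (|((a1:ℕ):ℝ) - ((a4:ℕ):ℝ)| + |((a2:ℕ):ℝ) - ((a3:ℕ):ℝ)|) with hmc | hmc <;>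
        rw [hmc]
      · linarith [hnn _ habs2]
      · linarith [hnn _ habs1]
    calc |κ (a1,a2) (a3,a4)| ≤ Cκ / (1 + dIdx (a1,a2) (a3,a4) ^ s) := h
      _ ≤ _ := hmin
      _ ≤ 4 * Cκ * (K a1 a3 * K a2 a4) + 4 * Cκ * (K a1 a4 * K a2 a3) :=
          add_le_add (hb a1 a3 a2 a4) (hb a1 a4 a2 a3)
  have hdouble : ∀ (f g : Fin N → ℝ), (∑ a, f a ≤ 2 * S) → (∑ b, g b ≤ 2 * S) →
      (∀ a, 0 ≤ f a) → (∀ b, 0 ≤ g b) →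
      ∑ a : Fin N, ∑ b : Fin N, f a * g b ≤ 4 * S ^ 2 := by
    intro f g hf hg0 hfnn hgnn
    have : ∑ a : Fin N, ∑ b : Fin N, f a * g b = (∑ a, f a) * (∑ b, g b) := by
      rw [Finset.sum_mul_sum]
    rw [this]
    calc (∑ a, f a) * (∑ b, g b) ≤ (2 * S) * (2 * S) :=
          mul_le_mul hf hg0 (Finset.sum_nonneg (fun b _ => hgnn b))
            (by positivity)
      _ = 4 * S ^ 2 := by ring
  -- row bound in a1
  have hRow_x : ∀ a1 : Fin N, ∑ a2 : Fin N, ∑ a3 : Fin N, ∑ a4 : Fin N,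
      |κ (a1,a2) (a3,a4)| ≤ 32 * Cκ * S ^ 2 * N := by
    intro a1
    calc ∑ a2 : Fin N, ∑ a3 : Fin N, ∑ a4 : Fin N, |κ (a1,a2) (a3,a4)|
        ≤ ∑ a2 : Fin N, ∑ a3 : Fin N, ∑ a4 : Fin N,
            (4 * Cκ * (K a1 a3 * K a2 a4) + 4 * Cκ * (K a1 a4 * K a2 a3)) := by
          refine Finset.sum_le_sum (fun a2 _ => Finset.sum_le_sum (fun a3 _ =>
            Finset.sum_le_sum (fun a4 _ => hκ4 a1 a2 a3 a4)))
      _ = ∑ a2 : Fin N, (4 * Cκ * (∑ a3 : Fin N, ∑ a4 : Fin N, K a1 a3 * K a2 a4)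
            + 4 * Cκ * (∑ a3 : Fin N, ∑ a4 : Fin N, K a1 a4 * K a2 a3)) := by
          simp only [Finset.sum_add_distrib, Finset.mul_sum]
      _ ≤ ∑ a2 : Fin N, (4 * Cκ * (4 * S ^ 2) + 4 * Cκ * (4 * S ^ 2)) := by
          refine Finset.sum_le_sum (fun a2 _ => add_le_add ?_ ?_)
          · refine mul_le_mul_of_nonneg_left ?_ (by positivity)
            exact hdouble (K a1) (K a2) (hrow a1) (hrow a2) (hKnn a1) (hKnn a2)
          · refine mul_le_mul_of_nonneg_left ?_ (by positivity)
            have : ∑ a3 : Fin N, ∑ a4 : Fin N, K a1 a4 * K a2 a3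
                = ∑ a3 : Fin N, ∑ a4 : Fin N, K a2 a3 * K a1 a4 := by
              refine Finset.sum_congr rfl (fun a3 _ => Finset.sum_congr rfl
                (fun a4 _ => mul_comm _ _))
            rw [this]
            exact hdouble (K a2) (K a1) (hrow a2) (hrow a1) (hKnn a2) (hKnn a1)
      _ = N * (4 * Cκ * (4 * S ^ 2) + 4 * Cκ * (4 * S ^ 2)) := by
          rw [Finset.sum_const, Finset.card_univ, Fintype.card_fin, nsmul_eq_mul]
      _ = 32 * Cκ * S ^ 2 * N := by ring
  -- row bound in a3
  have hc8 : 0 ≤ 4 * Cκ * (2 * S) := by nlinarith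
  have hRow_y : ∀ a3 : Fin N, ∑ a1 : Fin N, ∑ a2 : Fin N, ∑ a4 : Fin N,
      |κ (a1,a2) (a3,a4)| ≤ 32 * Cκ * S ^ 2 * N := by
    intro a3
    have e1 : ∀ a1 a2 : Fin N, ∑ a4 : Fin N,
        (4 * Cκ * (K a1 a3 * K a2 a4) + 4 * Cκ * (K a1 a4 * K a2 a3))
        ≤ 4 * Cκ * (2 * S) * K a1 a3 + 4 * Cκ * (2 * S) * K a2 a3 := by
      intro a1 a2
      rw [Finset.sum_add_distrib]
      refine add_le_add ?_ ?_
      · have : ∑ a4 : Fin N, 4 * Cκ * (K a1 a3 * K a2 a4)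
            = 4 * Cκ * K a1 a3 * ∑ a4 : Fin N, K a2 a4 := by
          rw [Finset.mul_sum]; exact Finset.sum_congr rfl fun _ _ => by ring
        rw [this]
        calc 4 * Cκ * K a1 a3 * ∑ a4 : Fin N, K a2 a4
            ≤ 4 * Cκ * K a1 a3 * (2 * S) := by
              refine mul_le_mul_of_nonneg_left (hrow a2) ?_
              have := hKnn a1 a3; nlinarith
          _ = 4 * Cκ * (2 * S) * K a1 a3 := by ring
      · have : ∑ a4 : Fin N, 4 * Cκ * (K a1 a4 * K a2 a3)
            = 4 * Cκ * K a2 a3 * ∑ a4 : Fin N, K a1 a4 := by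
          rw [Finset.mul_sum]; exact Finset.sum_congr rfl fun _ _ => by ring
        rw [this]
        calc 4 * Cκ * K a2 a3 * ∑ a4 : Fin N, K a1 a4
            ≤ 4 * Cκ * K a2 a3 * (2 * S) := by
              refine mul_le_mul_of_nonneg_left (hrow a1) ?_
              have := hKnn a2 a3; nlinarith
          _ = 4 * Cκ * (2 * S) * K a2 a3 := by ring
    calc ∑ a1 : Fin N, ∑ a2 : Fin N, ∑ a4 : Fin N, |κ (a1,a2) (a3,a4)|
        ≤ ∑ a1 : Fin N, ∑ a2 : Fin N,
            (4 * Cκ * (2 * S) * K a1 a3 + 4 * Cκ * (2 * S) * K a2 a3) := by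
          refine Finset.sum_le_sum (fun a1 _ => Finset.sum_le_sum (fun a2 _ => ?_))
          exact le_trans (Finset.sum_le_sum (fun a4 _ => hκ4 a1 a2 a3 a4)) (e1 a1 a2)
      _ = ∑ a1 : Fin N, ((N:ℝ) * (4 * Cκ * (2 * S) * K a1 a3)
            + 4 * Cκ * (2 * S) * ∑ a2 : Fin N, K a2 a3) := by
          refine Finset.sum_congr rfl fun a1 _ => ?_
          rw [Finset.sum_add_distrib, Finset.sum_const, Finset.card_univ,
            Fintype.card_fin, nsmul_eq_mul, ← Finset.mul_sum]
      _ ≤ ∑ a1 : Fin N, ((N:ℝ) * (4 * Cκ * (2 * S) * K a1 a3)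
            + 4 * Cκ * (2 * S) * (2 * S)) := by
          refine Finset.sum_le_sum (fun a1 _ => add_le_add_right ?_ _)
          exact mul_le_mul_of_nonneg_left (hrow' a3) hc8
      _ = (N:ℝ) * (4 * Cκ * (2 * S)) * (∑ a1 : Fin N, K a1 a3)
            + (N:ℝ) * (4 * Cκ * (2 * S) * (2 * S)) := by
          rw [Finset.sum_add_distrib, Finset.sum_const, Finset.card_univ,
            Fintype.card_fin, nsmul_eq_mul, ← Finset.mul_sum, ← Finset.mul_sum]
          ring
      _ ≤ (N:ℝ) * (4 * Cκ * (2 * S)) * (2 * S) + (N:ℝ) * (4 * Cκ * (2 * S) * (2 * S)) := by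
          refine add_le_add_left (mul_le_mul_of_nonneg_left (hrow' a3) ?_) _
          exact mul_nonneg (Nat.cast_nonneg N) hc8
      _ = 32 * Cκ * S ^ 2 * N := by ring
  -- Cauchy–Schwarz assembly
  set R : ℝ := 32 * Cκ * S ^ 2 * (N:ℝ) with hR
  have hRnn : 0 ≤ R := by
    rw [hR]
    have : (0:ℝ) ≤ 32 * Cκ * S ^ 2 := by nlinarith
    exact mul_nonneg this (Nat.cast_nonneg N)
  have hx2nn : 0 ≤ ∑ i, x i ^ 2 := Finset.sum_nonneg fun i _ => sq_nonneg _
  have hy2nn : 0 ≤ ∑ i, y i ^ 2 := Finset.sum_nonneg fun i _ => sq_nonneg _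
  have hEx : eucNorm x ^ 2 = ∑ i, x i ^ 2 := Real.sq_sqrt hx2nn
  have hEy : eucNorm y ^ 2 = ∑ i, y i ^ 2 := Real.sq_sqrt hy2nn
  have hExnn : 0 ≤ eucNorm x := Real.sqrt_nonneg _
  have hEynn : 0 ≤ eucNorm y := Real.sqrt_nonneg _
  have cs := Finset.sum_mul_sq_le_sq_mul_sq
    (univ : Finset ((Fin N × Fin N) × (Fin N × Fin N)))
    (fun q => Real.sqrt |κ q.1 q.2| * |x q.1.1|)
    (fun q => Real.sqrt |κ q.1 q.2| * |y q.2.1|)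
  have hsum_fg : ∑ q : (Fin N × Fin N) × (Fin N × Fin N),
      (Real.sqrt |κ q.1 q.2| * |x q.1.1|) * (Real.sqrt |κ q.1 q.2| * |y q.2.1|)
      = ∑ q : (Fin N × Fin N) × (Fin N × Fin N), |κ q.1 q.2| * |x q.1.1| * |y q.2.1| := by
    refine Finset.sum_congr rfl fun q _ => ?_
    rw [show (Real.sqrt |κ q.1 q.2| * |x q.1.1|) * (Real.sqrt |κ q.1 q.2| * |y q.2.1|)
        = (Real.sqrt |κ q.1 q.2| * Real.sqrt |κ q.1 q.2|) * (|x q.1.1| * |y q.2.1|) from by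
      ring]
    rw [Real.mul_self_sqrt (abs_nonneg _)]
    ring
  have hsum_f2 : ∑ q : (Fin N × Fin N) × (Fin N × Fin N),
      (Real.sqrt |κ q.1 q.2| * |x q.1.1|) ^ 2
      = ∑ q : (Fin N × Fin N) × (Fin N × Fin N), |κ q.1 q.2| * x q.1.1 ^ 2 := by
    refine Finset.sum_congr rfl fun q _ => ?_
    rw [mul_pow, Real.sq_sqrt (abs_nonneg _), sq_abs]
  have hsum_g2 : ∑ q : (Fin N × Fin N) × (Fin N × Fin N),
      (Real.sqrt |κ q.1 q.2| * |y q.2.1|) ^ 2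
      = ∑ q : (Fin N × Fin N) × (Fin N × Fin N), |κ q.1 q.2| * y q.2.1 ^ 2 := by
    refine Finset.sum_congr rfl fun q _ => ?_
    rw [mul_pow, Real.sq_sqrt (abs_nonneg _), sq_abs]
  have hX : ∑ q : (Fin N × Fin N) × (Fin N × Fin N), |κ q.1 q.2| * x q.1.1 ^ 2
      ≤ R * ∑ i, x i ^ 2 := by
    calc ∑ q : (Fin N × Fin N) × (Fin N × Fin N), |κ q.1 q.2| * x q.1.1 ^ 2
        = ∑ a1 : Fin N, (∑ a2 : Fin N, ∑ a3 : Fin N, ∑ a4 : Fin N,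
            |κ (a1,a2) (a3,a4)|) * x a1 ^ 2 := by
          simp only [Fintype.sum_prod_type]
          refine Finset.sum_congr rfl fun a1 _ => ?_
          rw [Finset.sum_mul]
          refine Finset.sum_congr rfl fun a2 _ => ?_
          rw [Finset.sum_mul]
          refine Finset.sum_congr rfl fun a3 _ => ?_
          rw [Finset.sum_mul]
      _ ≤ ∑ a1 : Fin N, R * x a1 ^ 2 := by
          refine Finset.sum_le_sum fun a1 _ => ?_
          exact mul_le_mul_of_nonneg_right (hRow_x a1) (sq_nonneg _)
      _ = R * ∑ i, x i ^ 2 := (Finset.mul_sum _ _ _).symm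
  have hY : ∑ q : (Fin N × Fin N) × (Fin N × Fin N), |κ q.1 q.2| * y q.2.1 ^ 2
      ≤ R * ∑ i, y i ^ 2 := by
    calc ∑ q : (Fin N × Fin N) × (Fin N × Fin N), |κ q.1 q.2| * y q.2.1 ^ 2
        = ∑ a3 : Fin N, (∑ a1 : Fin N, ∑ a2 : Fin N, ∑ a4 : Fin N,
            |κ (a1,a2) (a3,a4)|) * y a3 ^ 2 := by
          simp only [Fintype.sum_prod_type]
          calc ∑ a1 : Fin N, ∑ a2 : Fin N, ∑ a3 : Fin N, ∑ a4 : Fin N,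
              |κ (a1,a2) (a3,a4)| * y a3 ^ 2
              = ∑ a1 : Fin N, ∑ a3 : Fin N, ∑ a2 : Fin N, ∑ a4 : Fin N,
                |κ (a1,a2) (a3,a4)| * y a3 ^ 2 :=
                Finset.sum_congr rfl fun a1 _ => Finset.sum_comm
            _ = ∑ a3 : Fin N, ∑ a1 : Fin N, ∑ a2 : Fin N, ∑ a4 : Fin N,
                |κ (a1,a2) (a3,a4)| * y a3 ^ 2 := Finset.sum_comm
            _ = ∑ a3 : Fin N, (∑ a1 : Fin N, ∑ a2 : Fin N, ∑ a4 : Fin N,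
                |κ (a1,a2) (a3,a4)|) * y a3 ^ 2 := by
                refine Finset.sum_congr rfl fun a3 _ => ?_
                rw [Finset.sum_mul]
                refine Finset.sum_congr rfl fun a1 _ => ?_
                rw [Finset.sum_mul]
                refine Finset.sum_congr rfl fun a2 _ => ?_
                rw [Finset.sum_mul]
      _ ≤ ∑ a3 : Fin N, R * y a3 ^ 2 := by
          refine Finset.sum_le_sum fun a3 _ => ?_
          exact mul_le_mul_of_nonneg_right (hRow_y a3) (sq_nonneg _)
      _ = R * ∑ i, y i ^ 2 := (Finset.mul_sum _ _ _).symm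
  have hg2nn : 0 ≤ ∑ q : (Fin N × Fin N) × (Fin N × Fin N), |κ q.1 q.2| * y q.2.1 ^ 2 :=
    Finset.sum_nonneg fun q _ => mul_nonneg (abs_nonneg _) (sq_nonneg _)
  have cs2 : (∑ q : (Fin N × Fin N) × (Fin N × Fin N), |κ q.1 q.2| * |x q.1.1| * |y q.2.1|) ^ 2
      ≤ (R * ∑ i, x i ^ 2) * (R * ∑ i, y i ^ 2) := by
    rw [← hsum_fg]
    calc (∑ q : (Fin N × Fin N) × (Fin N × Fin N),
          (Real.sqrt |κ q.1 q.2| * |x q.1.1|) * (Real.sqrt |κ q.1 q.2| * |y q.2.1|)) ^ 2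
        ≤ (∑ q : (Fin N × Fin N) × (Fin N × Fin N), (Real.sqrt |κ q.1 q.2| * |x q.1.1|) ^ 2)
          * (∑ q : (Fin N × Fin N) × (Fin N × Fin N), (Real.sqrt |κ q.1 q.2| * |y q.2.1|) ^ 2) :=
          cs
      _ ≤ (R * ∑ i, x i ^ 2) * (R * ∑ i, y i ^ 2) := by
          rw [hsum_f2, hsum_g2]
          exact mul_le_mul hX hY hg2nn (mul_nonneg hRnn hx2nn)
  have hTnn : 0 ≤ ∑ q : (Fin N × Fin N) × (Fin N × Fin N), |κ q.1 q.2| * |x q.1.1| * |y q.2.1| :=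
    Finset.sum_nonneg fun q _ =>
      mul_nonneg (mul_nonneg (abs_nonneg _) (abs_nonneg _)) (abs_nonneg _)
  have hRHSnn : 0 ≤ R * eucNorm x * eucNorm y :=
    mul_nonneg (mul_nonneg hRnn hExnn) hEynn
  have hfin : (∑ q : (Fin N × Fin N) × (Fin N × Fin N), |κ q.1 q.2| * |x q.1.1| * |y q.2.1|) ^ 2
      ≤ (R * eucNorm x * eucNorm y) ^ 2 := by
    calc _ ≤ (R * ∑ i, x i ^ 2) * (R * ∑ i, y i ^ 2) := cs2
      _ = (R * eucNorm x * eucNorm y) ^ 2 := by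
          rw [show (R * eucNorm x * eucNorm y) ^ 2
            = R * eucNorm x ^ 2 * (R * eucNorm y ^ 2) from by ring, hEx, hEy]
  have key : ∑ q : (Fin N × Fin N) × (Fin N × Fin N), |κ q.1 q.2| * |x q.1.1| * |y q.2.1|
      ≤ R * eucNorm x * eucNorm y := by
    have h := Real.sqrt_le_sqrt hfin
    rwa [Real.sqrt_sq hTnn, Real.sqrt_sq hRHSnn] at h
  have key' : ∑ a1 : Fin N, ∑ a2 : Fin N, ∑ a3 : Fin N, ∑ a4 : Fin N,
      |κ (a1, a2) (a3, a4)| * |x a1| * |y a3| ≤ R * eucNorm x * eucNorm y := by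
    calc ∑ a1 : Fin N, ∑ a2 : Fin N, ∑ a3 : Fin N, ∑ a4 : Fin N,
        |κ (a1, a2) (a3, a4)| * |x a1| * |y a3|
        = ∑ q : (Fin N × Fin N) × (Fin N × Fin N), |κ q.1 q.2| * |x q.1.1| * |y q.2.1| := by
          simp only [Fintype.sum_prod_type]
      _ ≤ R * eucNorm x * eucNorm y := key
  have hgoal_eq : (32 * Cκ * S ^ 2) * (N:ℝ) * eucNorm x * eucNorm y
      = R * eucNorm x * eucNorm y := by rw [hR]
  refine ⟨?_, ?_⟩
  · calc ∑ a2 : Fin N, ∑ a4 : Fin N,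
        |∑ a1 : Fin N, ∑ a3 : Fin N, κ (a1, a2) (a3, a4) * x a1 * y a3|
        ≤ ∑ a2 : Fin N, ∑ a4 : Fin N, ∑ a1 : Fin N, ∑ a3 : Fin N,
          |κ (a1, a2) (a3, a4) * x a1 * y a3| := by
          refine Finset.sum_le_sum fun a2 _ => Finset.sum_le_sum fun a4 _ => ?_
          calc |∑ a1 : Fin N, ∑ a3 : Fin N, κ (a1, a2) (a3, a4) * x a1 * y a3|
              ≤ ∑ a1 : Fin N, |∑ a3 : Fin N, κ (a1, a2) (a3, a4) * x a1 * y a3| :=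
                Finset.abs_sum_le_sum_abs _ _
            _ ≤ ∑ a1 : Fin N, ∑ a3 : Fin N, |κ (a1, a2) (a3, a4) * x a1 * y a3| :=
                Finset.sum_le_sum fun a1 _ => Finset.abs_sum_le_sum_abs _ _
      _ = ∑ a2 : Fin N, ∑ a4 : Fin N, ∑ a1 : Fin N, ∑ a3 : Fin N,
          |κ (a1, a2) (a3, a4)| * |x a1| * |y a3| := by
          simp only [abs_mul]
      _ = ∑ a2 : Fin N, ∑ a1 : Fin N, ∑ a4 : Fin N, ∑ a3 : Fin N,
          |κ (a1, a2) (a3, a4)| * |x a1| * |y a3| :=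
          Finset.sum_congr rfl fun a2 _ => Finset.sum_comm
      _ = ∑ a1 : Fin N, ∑ a2 : Fin N, ∑ a4 : Fin N, ∑ a3 : Fin N,
          |κ (a1, a2) (a3, a4)| * |x a1| * |y a3| := Finset.sum_comm
      _ = ∑ a1 : Fin N, ∑ a2 : Fin N, ∑ a3 : Fin N, ∑ a4 : Fin N,
          |κ (a1, a2) (a3, a4)| * |x a1| * |y a3| :=
          Finset.sum_congr rfl fun a1 _ => Finset.sum_congr rfl fun a2 _ => Finset.sum_comm
      _ ≤ R * eucNorm x * eucNorm y := key'
      _ = (32 * Cκ * S ^ 2) * (N:ℝ) * eucNorm x * eucNorm y := hgoal_eq.symm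
  · calc ∑ a1 : Fin N, ∑ a2 : Fin N, ∑ a3 : Fin N, ∑ a4 : Fin N,
        |κ (a1, a2) (a3, a4)| * |x a1| * |y a3|
        ≤ R * eucNorm x * eucNorm y := key'
      _ = (32 * Cκ * S ^ 2) * (N:ℝ) * eucNorm x * eucNorm y := hgoal_eq.symm
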